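/- (Theorem 3.4(c), scaling law of the autocovariance along general directions.) Under exactly the hypotheses of Theorem 3.4(b) — families A(p), N(p), V(p), q(p) with V(p) satisfying the weak Lyapunov equation for (A(p), N(p), q(p), τ), a dominant adjoint Jordan chain w_1(p), …, w_{M₁}(p) for conj(Λ(p)) with Re Λ(p) < 0 and Re Λ(p) → 0 as p → p*⁻, the uniform bounds |Λ(p) − q(p)| ≥ C⁻, |⟨w_1(p), N(p) w_1(p)⟩| ≥ C⁻, ‖N(p)‖ ≤ C⁺, ‖w_k(p)‖ ≤ C⁺, |Λ(p)| ≤ C⁺, |q(p)| ≤ C⁺, families f_m(p) = Σ_{k=1}^{M₁} c_{m,k}(p)·w_k(p) + r_m(p) with c_{m,k} continuous at p*, uniformly bounded remainder pairings, k_m* := max{k : c_{m,k}(p*) ≠ 0} well defined and c_{m,k} ≡ 0 for k > k_m* — there exist δ > 0 and constants 0 < c ≤ C such that for all p ∈ (p* − δ, p*): c·(−Re Λ(p))^{−(k₁*+k₂*−1)} ≤ |⟨f₁(p), V(p) f₂(p)⟩| ≤ C·(−Re Λ(p))^{−(k₁*+k₂*−1)}. -/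

import Mathlib

open Filter

local notation "⟪" x ", " y "⟫" => @inner ℂ _ _ x y

/-- A bounded operator `V` satisfies the weak Lyapunov equation for `(A, N, q, τ)` if
`⟨v, A(Vw)⟩ + ⟨v, V(A†w)⟩ = −⟨v, exp(τA)((A − q·I)(N((A† − q·I)w)))⟩` for all `v, w`. -/
def WeakLyapunov {H : Type*} [NormedAddCommGroup H] [InnerProductSpace ℂ H] [CompleteSpace H]
    (A N V : H →L[ℂ] H) (q τ : ℝ) : Prop :=
  ∀ v w : H,
    ⟪v, A (V w)⟫ + ⟪v, V ((ContinuousLinearMap.adjoint A) w)⟫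
      = -⟪v, (NormedSpace.exp ((τ : ℂ) • A))
          ((A - (q : ℂ) • (1 : H →L[ℂ] H))
            (N (((ContinuousLinearMap.adjoint A) - (q : ℂ) • (1 : H →L[ℂ] H)) w)))⟫

open scoped Nat

/-- binomial coefficients with zero boundary -/
def bcoef (j k : ℕ) : ℕ := if j = 0 ∨ k = 0 then 0 else Nat.choose (j + k - 2) (j - 1)

lemma bcoef_one_left {k : ℕ} (hk : 1 ≤ k) : bcoef 1 k = 1 := by
  simp only [bcoef, if_neg (by omega : ¬ ((1:ℕ) = 0 ∨ k = 0))]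
  simp

lemma bcoef_one_right {j : ℕ} (hj : 1 ≤ j) : bcoef j 1 = 1 := by
  simp only [bcoef, if_neg (by omega : ¬ (j = 0 ∨ (1:ℕ) = 0))]
  have : j + 1 - 2 = j - 1 := by omega
  rw [this, Nat.choose_self]

lemma bcoef_pascal {j k : ℕ} (hj : 1 ≤ j) (hk : 1 ≤ k) (h : 3 ≤ j + k) :
    bcoef j k = bcoef (j - 1) k + bcoef j (k - 1) := by
  rcases Nat.lt_or_ge j 2 with hj2 | hj2
  · interval_cases j
    have hk2 : 2 ≤ k := by omega
    rw [bcoef_one_left hk, bcoef_one_left (by omega : 1 ≤ k - 1)]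
    simp [bcoef]
  rcases Nat.lt_or_ge k 2 with hk2 | hk2
  · interval_cases k
    rw [bcoef_one_right hj, bcoef_one_right (by omega : 1 ≤ j - 1)]
    simp [bcoef]
  · simp only [bcoef, if_neg (by omega : ¬ (j = 0 ∨ k = 0)),
      if_neg (by omega : ¬ (j - 1 = 0 ∨ k = 0)), if_neg (by omega : ¬ (j = 0 ∨ k - 1 = 0))]
    have e3 : j - 1 + k - 2 = j + k - 3 := by omega
    have e4 : j + (k - 1) - 2 = j + k - 3 := by omega
    have e5 : j - 1 - 1 = j - 2 := by omega
    rw [e3, e4, e5]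
    have e1 : j + k - 2 = (j + k - 3) + 1 := by omega
    have e2 : j - 1 = (j - 2) + 1 := by omega
    rw [e1, e2]
    exact Nat.choose_succ_succ _ _

lemma choose_le_two_pow' (n k : ℕ) : n.choose k ≤ 2 ^ n := by
  rcases le_or_gt k n with h | h
  · calc n.choose k ≤ ∑ m ∈ Finset.range (n + 1), n.choose m :=
        Finset.single_le_sum (fun i _ => Nat.zero_le _) (Finset.mem_range.mpr (by omega))
      _ = 2 ^ n := Nat.sum_range_choose n
  · rw [Nat.choose_eq_zero_of_lt h]; exact Nat.zero_le _

lemma bcoef_le (j k : ℕ) : bcoef j k ≤ 2 ^ (j + k) := by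
  have : bcoef j k ≤ 2 ^ (j + k - 2) := by
    rcases Nat.eq_zero_or_pos j with h | h
    · simp [bcoef, h]
    rcases Nat.eq_zero_or_pos k with h' | h'
    · simp [bcoef, h']
    · simp only [bcoef, if_neg (by omega : ¬ (j = 0 ∨ k = 0))]
      exact choose_le_two_pow' _ _
  exact this.trans (Nat.pow_le_pow_right (by norm_num) (by omega))

lemma bcoef_pos {j k : ℕ} (hj : 1 ≤ j) (hk : 1 ≤ k) : 1 ≤ bcoef j k := by
  simp only [bcoef, if_neg (by omega : ¬ (j = 0 ∨ k = 0))]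
  exact Nat.choose_pos (by omega)

lemma keyrec (M : ℕ) (G R : ℕ → ℕ → ℂ) (μ CR : ℝ) (hμ0 : 0 < μ) (hμ1 : μ ≤ 1) (hCR : 0 ≤ CR)
    (hG0 : ∀ k, G 0 k = 0) (hG0' : ∀ j, G j 0 = 0)
    (hrec : ∀ j k, 1 ≤ j → j ≤ M → 1 ≤ k → k ≤ M →
      (μ : ℂ) * G j k = G (j - 1) k + G j (k - 1) + R j k)
    (hR : ∀ j k, 1 ≤ j → j ≤ M → 1 ≤ k → k ≤ M → ‖R j k‖ ≤ CR) :
    ∀ j k, j ≤ M → k ≤ M →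
      ‖(μ : ℂ) ^ (j + k - 1) * G j k - (bcoef j k : ℂ) * R 1 1‖ ≤ 3 ^ (j + k) * CR * μ := by
  have main : ∀ n j k, j + k = n → j ≤ M → k ≤ M →
      ‖(μ : ℂ) ^ (j + k - 1) * G j k - (bcoef j k : ℂ) * R 1 1‖ ≤ 3 ^ (j + k) * CR * μ := by
    intro n
    induction n using Nat.strong_induction_on with
    | _ n ih =>
      intro j k hn hj hk
      have hRHS : (0:ℝ) ≤ 3 ^ (j + k) * CR * μ := by positivity
      rcases Nat.eq_zero_or_pos j with hj0 | hj1
      · subst hj0; simp only [hG0, mul_zero, bcoef, if_pos (Or.inl rfl)]; simpa using hRHS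
      rcases Nat.eq_zero_or_pos k with hk0 | hk1
      · subst hk0; simp only [hG0', mul_zero, bcoef, if_pos (Or.inr rfl)]; simpa using hRHS
      have hrec' := hrec j k hj1 hj hk1 hk
      rcases Nat.lt_or_ge (j + k) 3 with hjk | hjk
      · -- j = k = 1
        have hj' : j = 1 := by omega
        have hk' : k = 1 := by omega
        subst hj'; subst hk'
        have hG11 : (μ:ℂ) * G 1 1 = R 1 1 := by rw [hrec']; simp [hG0, hG0']
        have : (μ : ℂ) ^ (1 + 1 - 1) * G 1 1 - (bcoef 1 1 : ℂ) * R 1 1 = 0 := by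
          rw [show bcoef 1 1 = 1 from rfl, show (1+1-1 : ℕ) = 1 from rfl, pow_one, hG11]
          push_cast; ring
        rw [this]; simpa using hRHS
      · -- inductive step
        have key : (μ : ℂ) ^ (j + k - 1) * G j k
            = (μ:ℂ) ^ ((j-1) + k - 1) * G (j-1) k + (μ:ℂ) ^ (j + (k-1) - 1) * G j (k-1)
              + (μ:ℂ) ^ (j + k - 2) * R j k := by
          have e2 : (j - 1) + k - 1 = j + k - 2 := by omega
          have e3 : j + (k - 1) - 1 = j + k - 2 := by omega
          have e0 : (μ:ℂ) ^ (j + k - 1) * G j k = (μ:ℂ) ^ (j + k - 2) * ((μ:ℂ) * G j k) := by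
            rw [show j + k - 1 = (j + k - 2) + 1 by omega, pow_succ]; ring
          rw [e0, hrec', e2, e3]; ring
        have hb := bcoef_pascal hj1 hk1 hjk
        have ih1 := ih (n - 1) (by omega) (j - 1) k (by omega) (by omega) hk
        have ih2 := ih (n - 1) (by omega) j (k - 1) (by omega) hj (by omega)
        have hsplit : (μ : ℂ) ^ (j + k - 1) * G j k - (bcoef j k : ℂ) * R 1 1
            = ((μ:ℂ) ^ ((j-1) + k - 1) * G (j-1) k - (bcoef (j-1) k : ℂ) * R 1 1)
              + ((μ:ℂ) ^ (j + (k-1) - 1) * G j (k-1) - (bcoef j (k-1) : ℂ) * R 1 1)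
              + (μ:ℂ) ^ (j + k - 2) * R j k := by
          rw [key, hb]; push_cast; ring
        rw [hsplit]
        have hRjk : ‖(μ:ℂ) ^ (j + k - 2) * R j k‖ ≤ CR * μ := by
          rw [norm_mul, norm_pow, Complex.norm_real, Real.norm_of_nonneg hμ0.le]
          have h1 : μ ^ (j + k - 2) ≤ μ := by
            calc μ ^ (j + k - 2) ≤ μ ^ 1 := pow_le_pow_of_le_one hμ0.le hμ1 (by omega)
              _ = μ := pow_one μ
          calc μ ^ (j+k-2) * ‖R j k‖ ≤ μ * CR :=
                mul_le_mul h1 (hR j k hj1 hj hk1 hk) (norm_nonneg _) hμ0.le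
            _ = CR * μ := mul_comm _ _
        have h1k : (j - 1) + k = n - 1 := by omega
        have hk1' : j + (k - 1) = n - 1 := by omega
        calc ‖_ + _ + _‖ ≤ ‖_ + _‖ + ‖(μ:ℂ) ^ (j + k - 2) * R j k‖ := norm_add_le _ _
          _ ≤ (‖(μ:ℂ) ^ ((j-1) + k - 1) * G (j-1) k - (bcoef (j-1) k : ℂ) * R 1 1‖
              + ‖(μ:ℂ) ^ (j + (k-1) - 1) * G j (k-1) - (bcoef j (k-1) : ℂ) * R 1 1‖)
              + ‖(μ:ℂ) ^ (j + k - 2) * R j k‖ := by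
                gcongr; exact norm_add_le _ _
          _ ≤ (3 ^ ((j-1) + k) * CR * μ + 3 ^ (j + (k-1)) * CR * μ) + CR * μ := by
                gcongr
          _ ≤ 3 ^ (j + k) * CR * μ := by
                rw [h1k, hk1', hn]
                have h3 : (2 * 3 ^ (n - 1) + 1 : ℝ) ≤ 3 ^ n := by
                  have hne : (3:ℝ) ^ n = 3 * 3 ^ (n - 1) := by
                    rw [← pow_succ']; congr 1; omega
                  rw [hne]
                  nlinarith [one_le_pow₀ (by norm_num : (1:ℝ) ≤ 3) (n := n - 1)]
                nlinarith [mul_nonneg hCR hμ0.le]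
  intro j k hj hk; exact main (j + k) j k rfl hj hk

lemma exp_on_chain {H : Type*} [NormedAddCommGroup H] [InnerProductSpace ℂ H] [CompleteSpace H]
    (B : H →L[ℂ] H) (lam : ℂ) (τ : ℝ) (M : ℕ) (w : ℕ → H) (hw0 : w 0 = 0)
    (hch : ∀ k, 1 ≤ k → k ≤ M → B (w k) = lam • w k + w (k - 1)) :
    ∀ k ≤ M, NormedSpace.exp ((τ : ℂ) • B) (w k)
      = Complex.exp ((τ : ℂ) * lam) •
          ∑ i ∈ Finset.range k, (((τ : ℂ) ^ i / (i ! : ℂ)) • w (k - i)) := by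
  intro k hk
  set Cop : H →L[ℂ] H := B - lam • 1 with hCop
  have hc : ∀ m ≤ M, Cop (w m) = w (m - 1) := by
    intro m hm
    rcases Nat.eq_zero_or_pos m with h | h
    · subst h; simp [hCop, hw0]
    · simp [hCop, ContinuousLinearMap.sub_apply, hch m h hm]
  have hcpow : ∀ n, ∀ m ≤ M, (Cop ^ n) (w m) = w (m - n) := by
    intro n
    induction n with
    | zero => intro m hm; simp
    | succ n ih =>
        intro m hm
        rw [pow_succ, ContinuousLinearMap.mul_apply, hc m hm,
          ih (m - 1) (le_trans (Nat.sub_le _ _) hm)]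
        congr 1; omega
  have hsplit : (τ : ℂ) • B = ((τ : ℂ) * lam) • (1 : H →L[ℂ] H) + (τ : ℂ) • Cop := by
    simp only [hCop]; module
  have hcomm : Commute (((τ : ℂ) * lam) • (1 : H →L[ℂ] H)) ((τ : ℂ) • Cop) :=
    ((Commute.one_left Cop).smul_left _).smul_right _
  have hexp : NormedSpace.exp ((τ : ℂ) • B)
      = Complex.exp ((τ : ℂ) * lam) • NormedSpace.exp ((τ : ℂ) • Cop) := by
    rw [hsplit, NormedSpace.exp_add_of_commute_of_mem_ball (𝕂 := ℂ) hcomm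
        ((NormedSpace.expSeries_radius_eq_top ℂ (H →L[ℂ] H)).symm ▸ edist_lt_top _ _)
        ((NormedSpace.expSeries_radius_eq_top ℂ (H →L[ℂ] H)).symm ▸ edist_lt_top _ _),
      Algebra.smul_def ((τ : ℂ) * lam) (1 : H →L[ℂ] H), mul_one,
      ← NormedSpace.algebraMap_exp_comm, ← Complex.exp_eq_exp_ℂ,
      Algebra.algebraMap_eq_smul_one, smul_mul_assoc, one_mul]
  have happ : NormedSpace.exp ((τ : ℂ) • Cop) (w k)
      = ∑ i ∈ Finset.range k, (((τ : ℂ) ^ i / (i ! : ℂ)) • w (k - i)) := by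
    have hsum : Summable fun n : ℕ => ((n ! : ℂ)⁻¹) • ((τ : ℂ) • Cop) ^ n :=
      NormedSpace.expSeries_summable' (𝕂 := ℂ) ((τ : ℂ) • Cop)
    have h1 : NormedSpace.exp ((τ : ℂ) • Cop) (w k)
        = ∑' n : ℕ, (((n ! : ℂ)⁻¹) • ((τ : ℂ) • Cop) ^ n) (w k) := by
      rw [NormedSpace.exp_eq_tsum ℂ]
      exact (ContinuousLinearMap.apply ℂ H (w k)).map_tsum hsum
    rw [h1]
    have h2 : ∀ n : ℕ, (((n ! : ℂ)⁻¹) • ((τ : ℂ) • Cop) ^ n) (w k)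
        = ((τ : ℂ) ^ n / (n ! : ℂ)) • w (k - n) := by
      intro n
      rw [smul_pow, ContinuousLinearMap.smul_apply, ContinuousLinearMap.smul_apply,
        hcpow n k hk, smul_smul, div_eq_inv_mul]
    simp only [h2]
    refine tsum_eq_sum ?_
    intro n hn
    have : k - n = 0 := by simp at hn; omega
    rw [this, hw0, smul_zero]
  rw [hexp, ContinuousLinearMap.smul_apply, happ]

lemma inner_expand {H : Type*} [NormedAddCommGroup H] [InnerProductSpace ℂ H]
    (V : H →L[ℂ] H) (s t : Finset ℕ) (c d : ℕ → ℂ) (u v : ℕ → H) (r₁ r₂ : H) :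
    ⟪(∑ j ∈ s, c j • u j) + r₁, V ((∑ k ∈ t, d k • v k) + r₂)⟫
      = (∑ j ∈ s, ∑ k ∈ t, (starRingEnd ℂ) (c j) * d k * ⟪u j, V (v k)⟫)
        + (∑ j ∈ s, (starRingEnd ℂ) (c j) * ⟪u j, V r₂⟫)
        + (∑ k ∈ t, d k * ⟪r₁, V (v k)⟫) + ⟪r₁, V r₂⟫ := by
  have e1 : ∀ y : H, ⟪∑ j ∈ s, c j • u j, y⟫ = ∑ j ∈ s, (starRingEnd ℂ) (c j) * ⟪u j, y⟫ := by
    intro y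
    rw [sum_inner]
    exact Finset.sum_congr rfl fun j _ => inner_smul_left _ _ _
  have e2 : ∀ x : H, ⟪x, V ((∑ k ∈ t, d k • v k) + r₂)⟫
      = (∑ k ∈ t, d k * ⟪x, V (v k)⟫) + ⟪x, V r₂⟫ := by
    intro x
    rw [map_add, inner_add_right, map_sum, inner_sum]
    congr 1
    exact Finset.sum_congr rfl fun k _ => by rw [map_smul, inner_smul_right]
  have e3 : ∑ k ∈ t, d k * ∑ j ∈ s, (starRingEnd ℂ) (c j) * ⟪u j, V (v k)⟫
      = ∑ j ∈ s, ∑ k ∈ t, (starRingEnd ℂ) (c j) * d k * ⟪u j, V (v k)⟫ := by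
    simp_rw [Finset.mul_sum]
    rw [Finset.sum_comm]
    exact Finset.sum_congr rfl fun j _ => Finset.sum_congr rfl fun k _ => by ring
  rw [inner_add_left, e2, e2, e1]
  have e4 : ∀ k, ⟪∑ j ∈ s, c j • u j, V (v k)⟫ = ∑ j ∈ s, (starRingEnd ℂ) (c j) * ⟪u j, V (v k)⟫ :=
    fun k => e1 _
  simp_rw [e4]
  rw [e3]
  ring

lemma lyap_pointwise {H : Type*} [NormedAddCommGroup H] [InnerProductSpace ℂ H] [CompleteSpace H]
    (τ q : ℝ) (hτ : 0 ≤ τ) (M : ℕ) (hM : 1 ≤ M)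
    (Cm Cp : ℝ) (hCm : 0 < Cm) (hCp : 0 < Cp)
    (A N V : H →L[ℂ] H) (Λ : ℂ) (w : ℕ → H)
    (hLy : WeakLyapunov A N V q τ) (hre : Λ.re < 0) (hw0 : w 0 = 0)
    (hch : ∀ k, 1 ≤ k → k ≤ M →
      ContinuousLinearMap.adjoint A (w k) = (starRingEnd ℂ) Λ • w k + w (k - 1))
    (hq : Cm ≤ ‖Λ - (q : ℂ)‖) (hN1 : Cm ≤ ‖⟪w 1, N (w 1)⟫‖) (hNn : ‖N‖ ≤ Cp)
    (hwn : ∀ k, 1 ≤ k → k ≤ M → ‖w k‖ ≤ Cp) (hΛb : ‖Λ‖ ≤ Cp) (hqb : |q| ≤ Cp) :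
    ∃ R : ℕ → ℕ → ℂ,
      (∀ j k, 1 ≤ j → j ≤ M → 1 ≤ k → k ≤ M →
        ((-2 * Λ.re : ℝ) : ℂ) * ⟪w j, V (w k)⟫
          = ⟪w (j - 1), V (w k)⟫ + ⟪w j, V (w (k - 1))⟫ + R j k) ∧
      (∀ j k, 1 ≤ j → j ≤ M → 1 ≤ k → k ≤ M →
        ‖R j k‖ ≤ (Real.exp τ * (2 * Cp ^ 2 + Cp)) * (Cp * (2 * Cp ^ 2 + Cp))) ∧
      Real.exp (-(τ * Cp)) * Cm * Cm * Cm ≤ ‖R 1 1‖ := by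
  set B : H →L[ℂ] H := ContinuousLinearMap.adjoint A with hB
  set E : H →L[ℂ] H := NormedSpace.exp ((τ : ℂ) • A) with hE
  have hEadj : ContinuousLinearMap.adjoint E = NormedSpace.exp ((τ : ℂ) • B) := by
    rw [← ContinuousLinearMap.star_eq_adjoint, hE, NormedSpace.star_exp, star_smul, hB,
      ← ContinuousLinearMap.star_eq_adjoint]
    norm_num
  have hBqadj : ContinuousLinearMap.adjoint (A - (q : ℂ) • (1 : H →L[ℂ] H))
      = B - (q : ℂ) • (1 : H →L[ℂ] H) := by
    rw [← ContinuousLinearMap.star_eq_adjoint, star_sub, star_smul, star_one, hB,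
      ← ContinuousLinearMap.star_eq_adjoint]
    norm_num
  set R : ℕ → ℕ → ℂ := fun j k =>
    ⟪(B - (q : ℂ) • (1 : H →L[ℂ] H)) (ContinuousLinearMap.adjoint E (w j)),
      N ((B - (q : ℂ) • (1 : H →L[ℂ] H)) (w k))⟫ with hR
  -- chain for B
  have hwn' : ∀ k ≤ M, ‖w k‖ ≤ Cp := by
    intro k hk
    rcases Nat.eq_zero_or_pos k with h | h
    · simp [h, hw0, hCp.le]
    · exact hwn k h hk
  have hEw : ∀ j ≤ M, ContinuousLinearMap.adjoint E (w j)
      = Complex.exp ((τ : ℂ) * (starRingEnd ℂ) Λ) •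
          ∑ i ∈ Finset.range j, (((τ : ℂ) ^ i / (i ! : ℂ)) • w (j - i)) := by
    rw [hEadj]
    exact exp_on_chain B ((starRingEnd ℂ) Λ) τ M w hw0 hch
  have hBq : ∀ m ≤ M, (B - (q : ℂ) • (1 : H →L[ℂ] H)) (w m)
      = ((starRingEnd ℂ) Λ - (q : ℂ)) • w m + w (m - 1) := by
    intro m hm
    rcases Nat.eq_zero_or_pos m with h | h
    · subst h; simp [hw0]
    · rw [ContinuousLinearMap.sub_apply, hch m h hm, ContinuousLinearMap.smul_apply,
        ContinuousLinearMap.one_apply, sub_smul]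
      abel
  have hynorm : ∀ m ≤ M, ‖(B - (q : ℂ) • (1 : H →L[ℂ] H)) (w m)‖ ≤ 2 * Cp ^ 2 + Cp := by
    intro m hm
    rw [hBq m hm]
    have h1 : ‖(starRingEnd ℂ) Λ - (q : ℂ)‖ ≤ 2 * Cp := by
      calc ‖(starRingEnd ℂ) Λ - (q : ℂ)‖ ≤ ‖(starRingEnd ℂ) Λ‖ + ‖(q : ℂ)‖ := norm_sub_le _ _
        _ ≤ Cp + Cp := by
            rw [RCLike.norm_conj, Complex.norm_real, Real.norm_eq_abs]
            exact add_le_add hΛb hqb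
        _ = 2 * Cp := by ring
    calc ‖((starRingEnd ℂ) Λ - (q : ℂ)) • w m + w (m - 1)‖
        ≤ ‖(starRingEnd ℂ) Λ - (q : ℂ)‖ * ‖w m‖ + ‖w (m - 1)‖ := by
          refine (norm_add_le _ _).trans ?_; rw [norm_smul]
      _ ≤ 2 * Cp * Cp + Cp :=
          add_le_add (mul_le_mul h1 (hwn' m hm) (norm_nonneg _) (by positivity))
            (hwn' (m - 1) (le_trans (Nat.sub_le _ _) hm))
      _ = 2 * Cp ^ 2 + Cp := by ring
  have hexpabs : ‖Complex.exp ((τ : ℂ) * (starRingEnd ℂ) Λ)‖ = Real.exp (τ * Λ.re) := by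
    rw [Complex.norm_exp]
    congr 1
    simp [Complex.mul_re]
  have hexple : ‖Complex.exp ((τ : ℂ) * (starRingEnd ℂ) Λ)‖ ≤ 1 := by
    rw [hexpabs, Real.exp_le_one_iff]
    nlinarith
  have hxnorm : ∀ j, 1 ≤ j → j ≤ M →
      ‖(B - (q : ℂ) • (1 : H →L[ℂ] H)) (ContinuousLinearMap.adjoint E (w j))‖
        ≤ Real.exp τ * (2 * Cp ^ 2 + Cp) := by
    intro j hj1 hj
    rw [hEw j hj, map_smul, map_sum]
    have step : ∀ i ∈ Finset.range j,
        ‖(B - (q : ℂ) • (1 : H →L[ℂ] H)) (((τ : ℂ) ^ i / (i ! : ℂ)) • w (j - i))‖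
          ≤ (τ ^ i / (i ! : ℝ)) * (2 * Cp ^ 2 + Cp) := by
      intro i hi
      rw [map_smul, norm_smul]
      have hc : ‖(τ : ℂ) ^ i / (i ! : ℂ)‖ = τ ^ i / (i ! : ℝ) := by
        rw [norm_div, norm_pow, Complex.norm_real, Real.norm_of_nonneg hτ]
        norm_num
      rw [hc]
      have : j - i ≤ M := le_trans (Nat.sub_le _ _) hj
      exact mul_le_mul_of_nonneg_left (hynorm (j - i) this) (by positivity)
    calc ‖Complex.exp ((τ : ℂ) * (starRingEnd ℂ) Λ) •
            ∑ i ∈ Finset.range j,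
              (B - (q : ℂ) • (1 : H →L[ℂ] H)) (((τ : ℂ) ^ i / (i ! : ℂ)) • w (j - i))‖
        ≤ 1 * ‖∑ i ∈ Finset.range j,
              (B - (q : ℂ) • (1 : H →L[ℂ] H)) (((τ : ℂ) ^ i / (i ! : ℂ)) • w (j - i))‖ := by
          rw [norm_smul]
          exact mul_le_mul_of_nonneg_right hexple (norm_nonneg _)
      _ ≤ ∑ i ∈ Finset.range j, (τ ^ i / (i ! : ℝ)) * (2 * Cp ^ 2 + Cp) := by
          rw [one_mul]
          exact (norm_sum_le _ _).trans (Finset.sum_le_sum step)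
      _ = (∑ i ∈ Finset.range j, τ ^ i / (i ! : ℝ)) * (2 * Cp ^ 2 + Cp) := by
          rw [Finset.sum_mul]
      _ ≤ Real.exp τ * (2 * Cp ^ 2 + Cp) := by
          have := Real.sum_le_exp_of_nonneg hτ j
          nlinarith [this, sq_nonneg Cp]
  refine ⟨R, ?_, ?_, ?_⟩
  · -- recursion identity
    intro j k hj1 hj hk1 hk
    have lyap := hLy (w j) (w k)
    have t1 : ⟪w j, A (V (w k))⟫ = Λ * ⟪w j, V (w k)⟫ + ⟪w (j-1), V (w k)⟫ := by
      rw [← ContinuousLinearMap.adjoint_inner_left, ← hB, hch j hj1 hj, inner_add_left,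
        inner_smul_left, starRingEnd_self_apply]
    have t2 : ⟪w j, V (ContinuousLinearMap.adjoint A (w k))⟫
        = (starRingEnd ℂ) Λ * ⟪w j, V (w k)⟫ + ⟪w j, V (w (k-1))⟫ := by
      rw [hch k hk1 hk, map_add, map_smul, inner_add_right, inner_smul_right]
    have t3 : ⟪w j, E ((A - (q : ℂ) • (1 : H →L[ℂ] H))
          (N (((ContinuousLinearMap.adjoint A) - (q : ℂ) • (1 : H →L[ℂ] H)) (w k))))⟫
        = R j k := by
      rw [← ContinuousLinearMap.adjoint_inner_left E, ← ContinuousLinearMap.adjoint_inner_left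
        (A - (q : ℂ) • (1 : H →L[ℂ] H)), hBqadj]
    rw [t1, t2, t3] at lyap
    have hconj : Λ + (starRingEnd ℂ) Λ = ((2 * Λ.re : ℝ) : ℂ) := by
      rw [Complex.add_conj]
    have : (Λ + (starRingEnd ℂ) Λ) * ⟪w j, V (w k)⟫ + ⟪w (j-1), V (w k)⟫ + ⟪w j, V (w (k-1))⟫
        = - R j k := by linear_combination lyap
    rw [hconj] at this
    linear_combination (norm := (push_cast; ring)) -this
  · -- upper bound
    intro j k hj1 hj hk1 hk
    rw [hR]
    calc ‖⟪(B - (q : ℂ) • (1 : H →L[ℂ] H)) (ContinuousLinearMap.adjoint E (w j)),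
            N ((B - (q : ℂ) • (1 : H →L[ℂ] H)) (w k))⟫‖
        ≤ ‖(B - (q : ℂ) • (1 : H →L[ℂ] H)) (ContinuousLinearMap.adjoint E (w j))‖
            * ‖N ((B - (q : ℂ) • (1 : H →L[ℂ] H)) (w k))‖ := norm_inner_le_norm _ _
      _ ≤ (Real.exp τ * (2 * Cp ^ 2 + Cp)) * (Cp * (2 * Cp ^ 2 + Cp)) := by
          refine mul_le_mul (hxnorm j hj1 hj) ?_ (norm_nonneg _) (by positivity)
          calc ‖N ((B - (q : ℂ) • (1 : H →L[ℂ] H)) (w k))‖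
              ≤ ‖N‖ * ‖(B - (q : ℂ) • (1 : H →L[ℂ] H)) (w k)‖ := N.le_opNorm _
            _ ≤ Cp * (2 * Cp ^ 2 + Cp) :=
                mul_le_mul hNn (hynorm k hk) (norm_nonneg _) hCp.le
  · -- lower bound on R 1 1
    have hx1 : ContinuousLinearMap.adjoint E (w 1)
        = Complex.exp ((τ : ℂ) * (starRingEnd ℂ) Λ) • w 1 := by
      rw [hEw 1 hM]
      simp
    have hb1 : (B - (q : ℂ) • (1 : H →L[ℂ] H)) (w 1)
        = ((starRingEnd ℂ) Λ - (q : ℂ)) • w 1 := by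
      rw [hBq 1 hM]; simp [hw0]
    have hR11 : R 1 1 = (starRingEnd ℂ) (Complex.exp ((τ : ℂ) * (starRingEnd ℂ) Λ)
          * ((starRingEnd ℂ) Λ - (q : ℂ))) * (((starRingEnd ℂ) Λ - (q : ℂ)) * ⟪w 1, N (w 1)⟫) := by
      rw [hR]
      simp only [hx1, map_smul, hb1, smul_smul]
      rw [inner_smul_left, inner_smul_right]
    have habs : ‖(starRingEnd ℂ) Λ - (q : ℂ)‖ = ‖Λ - (q : ℂ)‖ := by
      rw [show (starRingEnd ℂ) Λ - (q : ℂ) = (starRingEnd ℂ) (Λ - (q : ℂ)) by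
        rw [map_sub, Complex.conj_ofReal], RCLike.norm_conj]
    have hexplow : Real.exp (-(τ * Cp)) ≤ ‖Complex.exp ((τ : ℂ) * (starRingEnd ℂ) Λ)‖ := by
      rw [hexpabs, Real.exp_le_exp]
      have h5 : -Cp ≤ Λ.re := (abs_le.mp (le_trans (Complex.abs_re_le_norm Λ) hΛb)).1
      calc -(τ * Cp) = τ * (-Cp) := by ring
        _ ≤ τ * Λ.re := mul_le_mul_of_nonneg_left h5 hτ
    rw [hR11]
    rw [norm_mul, RCLike.norm_conj, norm_mul, norm_mul, habs]
    calc Real.exp (-(τ * Cp)) * Cm * Cm * Cm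
        ≤ (‖Complex.exp ((τ : ℂ) * (starRingEnd ℂ) Λ)‖ * ‖Λ - (q : ℂ)‖)
            * (‖Λ - (q : ℂ)‖ * ‖⟪w 1, N (w 1)⟫‖) := by
          have h1 : Real.exp (-(τ * Cp)) * Cm
              ≤ ‖Complex.exp ((τ : ℂ) * (starRingEnd ℂ) Λ)‖ * ‖Λ - (q : ℂ)‖ :=
            mul_le_mul hexplow hq hCm.le (norm_nonneg _)
          have h2 : Cm * Cm ≤ ‖Λ - (q : ℂ)‖ * ‖⟪w 1, N (w 1)⟫‖ :=
            mul_le_mul hq hN1 hCm.le (norm_nonneg _)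
          calc Real.exp (-(τ * Cp)) * Cm * Cm * Cm
              = (Real.exp (-(τ * Cp)) * Cm) * (Cm * Cm) := by ring
            _ ≤ _ := mul_le_mul h1 h2 (by positivity) (by positivity)
      _ = _ := by ring

set_option maxHeartbeats 1600000 in
lemma scaling_at_p {H : Type*} [NormedAddCommGroup H] [InnerProductSpace ℂ H] [CompleteSpace H]
    (τ q : ℝ) (hτ : 0 ≤ τ) (M : ℕ) (hM : 1 ≤ M)
    (Cm Cp Cc α β CR c0 BB D : ℝ)
    (hCm : 0 < Cm) (hCp : 0 < Cp) (hCc : 1 ≤ Cc) (hα : 0 < α) (hβ : 0 < β)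
    (hCRdef : CR = (Real.exp τ * (2 * Cp ^ 2 + Cp)) * (Cp * (2 * Cp ^ 2 + Cp)))
    (hc0def : c0 = Real.exp (-(τ * Cp)) * Cm * Cm * Cm)
    (hBBdef : BB = 2 ^ (2 * M) * CR + 3 ^ (2 * M) * CR)
    (hDdef : D = (M * M : ℝ) * (Cc * Cc * BB) + (2 * M * Cc * Cp + Cp))
    (A N V : H →L[ℂ] H) (Λ : ℂ) (w : ℕ → H)
    (hLy : WeakLyapunov A N V q τ) (hre : Λ.re < 0) (hw0 : w 0 = 0)
    (hch : ∀ k, 1 ≤ k → k ≤ M →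
      ContinuousLinearMap.adjoint A (w k) = (starRingEnd ℂ) Λ • w k + w (k - 1))
    (hq : Cm ≤ ‖Λ - (q : ℂ)‖) (hN1 : Cm ≤ ‖⟪w 1, N (w 1)⟫‖) (hNn : ‖N‖ ≤ Cp)
    (hwn : ∀ k, 1 ≤ k → k ≤ M → ‖w k‖ ≤ Cp) (hΛb : ‖Λ‖ ≤ Cp) (hqb : |q| ≤ Cp)
    (f₁ f₂ : H) (cc₁ cc₂ : ℕ → ℂ) (r₁ r₂ : H)
    (hf₁ : f₁ = (∑ k ∈ Finset.Icc 1 M, cc₁ k • w k) + r₁)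
    (hf₂ : f₂ = (∑ k ∈ Finset.Icc 1 M, cc₂ k • w k) + r₂)
    (hrr : ‖⟪r₁, V r₂⟫‖ ≤ Cp)
    (hrw : ∀ k, 1 ≤ k → k ≤ M → ‖⟪r₁, V (w k)⟫‖ ≤ Cp)
    (hwr : ∀ k, 1 ≤ k → k ≤ M → ‖⟪w k, V r₂⟫‖ ≤ Cp)
    (k₁s k₂s : ℕ) (hk₁ : 1 ≤ k₁s) (hk₁M : k₁s ≤ M) (hk₂ : 1 ≤ k₂s) (hk₂M : k₂s ≤ M)
    (hcb₁ : ∀ k, 1 ≤ k → k ≤ M → ‖cc₁ k‖ ≤ Cc) (hcb₂ : ∀ k, 1 ≤ k → k ≤ M → ‖cc₂ k‖ ≤ Cc)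
    (hlow₁ : α ≤ ‖cc₁ k₁s‖) (hlow₂ : β ≤ ‖cc₂ k₂s‖)
    (hz₁ : ∀ k, k₁s < k → cc₁ k = 0) (hz₂ : ∀ k, k₂s < k → cc₂ k = 0)
    (hμ1 : -2 * Λ.re ≤ 1)
    (hμε : -2 * Λ.re ≤ (α * β * c0 / 2) / (α * β * (3 ^ (2 * M) * CR) + D)) :
    α * β * c0 / 2 ≤ (-2 * Λ.re) ^ (k₁s + k₂s - 1) * ‖⟪f₁, V f₂⟫‖ ∧
      (-2 * Λ.re) ^ (k₁s + k₂s - 1) * ‖⟪f₁, V f₂⟫‖ ≤ Cc * Cc * BB + D := by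
  have hμ0 : 0 < -2 * Λ.re := by linarith
  have hCRpos : 0 < CR := by rw [hCRdef]; positivity
  have hc0pos : 0 < c0 := by rw [hc0def]; positivity
  have hBBpos : 0 < BB := by rw [hBBdef]; positivity
  have hDpos : 0 < D := by rw [hDdef]; positivity
  obtain ⟨R, hrec, hRb, hR11⟩ := lyap_pointwise τ q hτ M hM Cm Cp hCm hCp A N V Λ w
    hLy hre hw0 hch hq hN1 hNn hwn hΛb hqb
  set G : ℕ → ℕ → ℂ := fun j k => ⟪w j, V (w k)⟫ with hGdef
  have hG0 : ∀ k, G 0 k = 0 := by intro k; simp [hGdef, hw0]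
  have hG0' : ∀ j, G j 0 = 0 := by intro j; simp [hGdef, hw0]
  have hRb' : ∀ j k, 1 ≤ j → j ≤ M → 1 ≤ k → k ≤ M → ‖R j k‖ ≤ CR := by
    intro j k h1 h2 h3 h4; rw [hCRdef]; exact hRb j k h1 h2 h3 h4
  have hR11' : c0 ≤ ‖R 1 1‖ := by rw [hc0def]; exact hR11
  have hkey := keyrec M G R (-2 * Λ.re) CR hμ0 hμ1 hCRpos.le hG0 hG0' hrec hRb'
  -- upper bound on G entries
  have hGup : ∀ j k, 1 ≤ j → j ≤ M → 1 ≤ k → k ≤ M →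
      (-2 * Λ.re) ^ (j + k - 1) * ‖G j k‖ ≤ BB := by
    intro j k h1 h2 h3 h4
    have hk' := hkey j k h2 h4
    have e1 : ‖((-2 * Λ.re : ℝ) : ℂ) ^ (j + k - 1) * G j k‖
        = (-2 * Λ.re) ^ (j + k - 1) * ‖G j k‖ := by
      rw [norm_mul, norm_pow, Complex.norm_real, Real.norm_of_nonneg hμ0.le]
    have e2 : ‖((-2 * Λ.re : ℝ) : ℂ) ^ (j + k - 1) * G j k‖
        ≤ ‖(bcoef j k : ℂ) * R 1 1‖ + 3 ^ (j + k) * CR * (-2 * Λ.re) := by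
      calc ‖((-2 * Λ.re : ℝ) : ℂ) ^ (j + k - 1) * G j k‖
          ≤ ‖((-2 * Λ.re : ℝ) : ℂ) ^ (j + k - 1) * G j k - (bcoef j k : ℂ) * R 1 1‖
            + ‖(bcoef j k : ℂ) * R 1 1‖ := by
            exact (norm_le_norm_add_norm_sub' _ _).trans (by rw [add_comm])
        _ ≤ ‖(bcoef j k : ℂ) * R 1 1‖ + 3 ^ (j + k) * CR * (-2 * Λ.re) := by
            rw [add_comm]; gcongr
    have e3 : ‖(bcoef j k : ℂ) * R 1 1‖ ≤ 2 ^ (2 * M) * CR := by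
      rw [norm_mul, Complex.norm_natCast]
      calc (bcoef j k : ℝ) * ‖R 1 1‖ ≤ 2 ^ (j + k) * CR := by
            gcongr
            · exact_mod_cast bcoef_le j k
            · exact hRb' 1 1 le_rfl hM le_rfl hM
        _ ≤ 2 ^ (2 * M) * CR := by gcongr <;> [norm_num; omega]
    have e4 : 3 ^ (j + k) * CR * (-2 * Λ.re) ≤ 3 ^ (2 * M) * CR := by
      calc 3 ^ (j + k) * CR * (-2 * Λ.re) ≤ 3 ^ (j + k) * CR * 1 := by gcongr
        _ = 3 ^ (j + k) * CR := by ring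
        _ ≤ 3 ^ (2 * M) * CR := by gcongr <;> [norm_num; omega]
    rw [← e1, hBBdef]
    linarith
  -- lower bound at (k₁s, k₂s)
  have hGlow : c0 - 3 ^ (2 * M) * CR * (-2 * Λ.re)
      ≤ (-2 * Λ.re) ^ (k₁s + k₂s - 1) * ‖G k₁s k₂s‖ := by
    have hk' := hkey k₁s k₂s hk₁M hk₂M
    have e1 : ‖((-2 * Λ.re : ℝ) : ℂ) ^ (k₁s + k₂s - 1) * G k₁s k₂s‖
        = (-2 * Λ.re) ^ (k₁s + k₂s - 1) * ‖G k₁s k₂s‖ := by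
      rw [norm_mul, norm_pow, Complex.norm_real, Real.norm_of_nonneg hμ0.le]
    have e3 : c0 ≤ ‖(bcoef k₁s k₂s : ℂ) * R 1 1‖ := by
      rw [norm_mul, Complex.norm_natCast]
      calc c0 = 1 * c0 := (one_mul c0).symm
        _ ≤ (bcoef k₁s k₂s : ℝ) * ‖R 1 1‖ :=
            mul_le_mul (by exact_mod_cast bcoef_pos hk₁ hk₂) hR11' hc0pos.le (by positivity)
    have e4 : 3 ^ (k₁s + k₂s) * CR * (-2 * Λ.re) ≤ 3 ^ (2 * M) * CR * (-2 * Λ.re) := by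
      gcongr <;> [norm_num; omega]
    have e5 : ‖(bcoef k₁s k₂s : ℂ) * R 1 1‖
        - ‖((-2 * Λ.re : ℝ) : ℂ) ^ (k₁s + k₂s - 1) * G k₁s k₂s - (bcoef k₁s k₂s : ℂ) * R 1 1‖
        ≤ ‖((-2 * Λ.re : ℝ) : ℂ) ^ (k₁s + k₂s - 1) * G k₁s k₂s‖ := by
      have h1 := norm_sub_norm_le ((bcoef k₁s k₂s : ℂ) * R 1 1)
        (((-2 * Λ.re : ℝ) : ℂ) ^ (k₁s + k₂s - 1) * G k₁s k₂s)
      have h2 := norm_sub_rev (((-2 * Λ.re : ℝ) : ℂ) ^ (k₁s + k₂s - 1) * G k₁s k₂s)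
        ((bcoef k₁s k₂s : ℂ) * R 1 1)
      linarith
    rw [← e1]
    linarith
  -- decomposition of the pairing
  have hsub₁ : Finset.Icc 1 k₁s ⊆ Finset.Icc 1 M := Finset.Icc_subset_Icc le_rfl hk₁M
  have hsub₂ : Finset.Icc 1 k₂s ⊆ Finset.Icc 1 M := Finset.Icc_subset_Icc le_rfl hk₂M
  have hdouble : (∑ j ∈ Finset.Icc 1 M, ∑ k ∈ Finset.Icc 1 M,
        (starRingEnd ℂ) (cc₁ j) * cc₂ k * G j k)
      = ∑ j ∈ Finset.Icc 1 k₁s, ∑ k ∈ Finset.Icc 1 k₂s,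
        (starRingEnd ℂ) (cc₁ j) * cc₂ k * G j k := by
    rw [← Finset.sum_subset hsub₁ (fun j hjm hj => ?_)]
    · refine Finset.sum_congr rfl fun j hj => ?_
      rw [← Finset.sum_subset hsub₂ (fun k hkm hk => ?_)]
      have : cc₂ k = 0 := by
        refine hz₂ k ?_
        rw [Finset.mem_Icc] at hkm hk
        omega
      rw [this, mul_zero, zero_mul]
    · refine Finset.sum_eq_zero fun k _ => ?_
      have : cc₁ j = 0 := by
        refine hz₁ j ?_
        rw [Finset.mem_Icc] at hjm hj
        omega
      rw [this, map_zero, zero_mul, zero_mul]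
  have hmem : (k₁s, k₂s) ∈ Finset.Icc 1 k₁s ×ˢ Finset.Icc 1 k₂s := by
    simp [Finset.mem_product, Finset.mem_Icc, hk₁, hk₂]
  have hsplit : (∑ j ∈ Finset.Icc 1 k₁s, ∑ k ∈ Finset.Icc 1 k₂s,
        (starRingEnd ℂ) (cc₁ j) * cc₂ k * G j k)
      = (starRingEnd ℂ) (cc₁ k₁s) * cc₂ k₂s * G k₁s k₂s
        + ∑ p ∈ (Finset.Icc 1 k₁s ×ˢ Finset.Icc 1 k₂s).erase (k₁s, k₂s),
            (starRingEnd ℂ) (cc₁ p.1) * cc₂ p.2 * G p.1 p.2 := by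
    rw [← Finset.sum_product']
    exact (Finset.add_sum_erase _ _ hmem).symm
  set T2 : ℂ := ∑ p ∈ (Finset.Icc 1 k₁s ×ˢ Finset.Icc 1 k₂s).erase (k₁s, k₂s),
      (starRingEnd ℂ) (cc₁ p.1) * cc₂ p.2 * G p.1 p.2 with hT2def
  set X1 : ℂ := ∑ j ∈ Finset.Icc 1 M, (starRingEnd ℂ) (cc₁ j) * ⟪w j, V r₂⟫ with hX1def
  set X2 : ℂ := ∑ k ∈ Finset.Icc 1 M, cc₂ k * ⟪r₁, V (w k)⟫ with hX2def
  have hS : ⟪f₁, V f₂⟫ = (starRingEnd ℂ) (cc₁ k₁s) * cc₂ k₂s * G k₁s k₂s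
      + (T2 + (X1 + X2 + ⟪r₁, V r₂⟫)) := by
    rw [hf₁, hf₂, inner_expand, hdouble, hsplit, hT2def, hX1def, hX2def]
    ring
  -- norm bounds on the remainder pieces
  have hT2b : (-2 * Λ.re) ^ (k₁s + k₂s - 2) * ‖T2‖ ≤ (M * M : ℝ) * (Cc * Cc * BB) := by
    have hterm : ∀ p ∈ (Finset.Icc 1 k₁s ×ˢ Finset.Icc 1 k₂s).erase (k₁s, k₂s),
        ‖(starRingEnd ℂ) (cc₁ p.1) * cc₂ p.2 * G p.1 p.2‖ * (-2 * Λ.re) ^ (k₁s + k₂s - 2)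
          ≤ Cc * Cc * BB := by
      rintro ⟨j, k⟩ hp
      rw [Finset.mem_erase, Finset.mem_product, Finset.mem_Icc, Finset.mem_Icc] at hp
      obtain ⟨hne, ⟨hj1, hjk₁⟩, hk1, hkk₂⟩ := hp
      have hjM : j ≤ M := le_trans hjk₁ hk₁M
      have hkM : k ≤ M := le_trans hkk₂ hk₂M
      have hlejk : j + k ≤ k₁s + k₂s - 1 := by
        rcases Nat.lt_or_ge (j + k) (k₁s + k₂s) with h | h
        · omega
        · exfalso; apply hne
          have : j = k₁s ∧ k = k₂s := by omega
          simp [Prod.ext_iff, this.1, this.2]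
      have hpow : (-2 * Λ.re) ^ (k₁s + k₂s - 2) ≤ (-2 * Λ.re) ^ (j + k - 1) :=
        pow_le_pow_of_le_one hμ0.le hμ1 (by omega)
      have hg : (-2 * Λ.re) ^ (k₁s + k₂s - 2) * ‖G j k‖ ≤ BB := by
        calc (-2 * Λ.re) ^ (k₁s + k₂s - 2) * ‖G j k‖
            ≤ (-2 * Λ.re) ^ (j + k - 1) * ‖G j k‖ :=
              mul_le_mul_of_nonneg_right hpow (norm_nonneg _)
          _ ≤ BB := hGup j k hj1 hjM hk1 hkM
      calc ‖(starRingEnd ℂ) (cc₁ j) * cc₂ k * G j k‖ * (-2 * Λ.re) ^ (k₁s + k₂s - 2)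
          = (‖cc₁ j‖ * ‖cc₂ k‖) * ((-2 * Λ.re) ^ (k₁s + k₂s - 2) * ‖G j k‖) := by
            rw [norm_mul, norm_mul, RCLike.norm_conj]; ring
        _ ≤ (Cc * Cc) * BB := by
            refine mul_le_mul ?_ hg (by positivity) (by positivity)
            exact mul_le_mul (hcb₁ j hj1 hjM) (hcb₂ k hk1 hkM) (norm_nonneg _)
              (le_trans (by norm_num) hCc)
        _ = Cc * Cc * BB := by ring
    have hcard : (((Finset.Icc 1 k₁s ×ˢ Finset.Icc 1 k₂s).erase (k₁s, k₂s)).card : ℝ)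
        ≤ (M * M : ℝ) := by
      have h1 : ((Finset.Icc 1 k₁s ×ˢ Finset.Icc 1 k₂s).erase (k₁s, k₂s)).card
          ≤ (Finset.Icc 1 k₁s ×ˢ Finset.Icc 1 k₂s).card := Finset.card_erase_le
      have h2 : (Finset.Icc 1 k₁s ×ˢ Finset.Icc 1 k₂s).card = k₁s * k₂s := by
        rw [Finset.card_product, Nat.card_Icc, Nat.card_Icc]
        simp
      have : ((Finset.Icc 1 k₁s ×ˢ Finset.Icc 1 k₂s).erase (k₁s, k₂s)).card ≤ M * M := by
        calc _ ≤ k₁s * k₂s := h2 ▸ h1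
          _ ≤ M * M := Nat.mul_le_mul hk₁M hk₂M
      exact_mod_cast this
    calc (-2 * Λ.re) ^ (k₁s + k₂s - 2) * ‖T2‖
        ≤ (-2 * Λ.re) ^ (k₁s + k₂s - 2)
            * ∑ p ∈ (Finset.Icc 1 k₁s ×ˢ Finset.Icc 1 k₂s).erase (k₁s, k₂s),
              ‖(starRingEnd ℂ) (cc₁ p.1) * cc₂ p.2 * G p.1 p.2‖ :=
          mul_le_mul_of_nonneg_left (norm_sum_le _ _) (by positivity)
      _ = ∑ p ∈ (Finset.Icc 1 k₁s ×ˢ Finset.Icc 1 k₂s).erase (k₁s, k₂s),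
            ‖(starRingEnd ℂ) (cc₁ p.1) * cc₂ p.2 * G p.1 p.2‖ * (-2 * Λ.re) ^ (k₁s + k₂s - 2) := by
          rw [Finset.mul_sum]; exact Finset.sum_congr rfl fun p _ => mul_comm _ _
      _ ≤ ((Finset.Icc 1 k₁s ×ˢ Finset.Icc 1 k₂s).erase (k₁s, k₂s)).card • (Cc * Cc * BB) :=
          Finset.sum_le_card_nsmul _ _ _ hterm
      _ = (((Finset.Icc 1 k₁s ×ˢ Finset.Icc 1 k₂s).erase (k₁s, k₂s)).card : ℝ)
            * (Cc * Cc * BB) := by rw [nsmul_eq_mul]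
      _ ≤ (M * M : ℝ) * (Cc * Cc * BB) :=
          mul_le_mul_of_nonneg_right hcard (by positivity)
  have hX1b : ‖X1‖ ≤ (M : ℝ) * (Cc * Cp) := by
    calc ‖X1‖ ≤ ∑ j ∈ Finset.Icc 1 M, ‖(starRingEnd ℂ) (cc₁ j) * ⟪w j, V r₂⟫‖ :=
        norm_sum_le _ _
      _ ≤ (Finset.Icc 1 M).card • (Cc * Cp) := by
          refine Finset.sum_le_card_nsmul _ _ _ fun j hj => ?_
          rw [Finset.mem_Icc] at hj
          rw [norm_mul, RCLike.norm_conj]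
          exact mul_le_mul (hcb₁ j hj.1 hj.2) (hwr j hj.1 hj.2) (norm_nonneg _)
            (le_trans (by norm_num) hCc)
      _ = ((Finset.Icc 1 M).card : ℝ) * (Cc * Cp) := by rw [nsmul_eq_mul]
      _ ≤ (M : ℝ) * (Cc * Cp) := by
          have : (Finset.Icc 1 M).card = M := by rw [Nat.card_Icc]; omega
          rw [this]
  have hX2b : ‖X2‖ ≤ (M : ℝ) * (Cc * Cp) := by
    calc ‖X2‖ ≤ ∑ k ∈ Finset.Icc 1 M, ‖cc₂ k * ⟪r₁, V (w k)⟫‖ := norm_sum_le _ _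
      _ ≤ (Finset.Icc 1 M).card • (Cc * Cp) := by
          refine Finset.sum_le_card_nsmul _ _ _ fun k hk => ?_
          rw [Finset.mem_Icc] at hk
          rw [norm_mul]
          exact mul_le_mul (hcb₂ k hk.1 hk.2) (hrw k hk.1 hk.2) (norm_nonneg _)
            (le_trans (by norm_num) hCc)
      _ = ((Finset.Icc 1 M).card : ℝ) * (Cc * Cp) := by rw [nsmul_eq_mul]
      _ ≤ (M : ℝ) * (Cc * Cp) := by
          have : (Finset.Icc 1 M).card = M := by rw [Nat.card_Icc]; omega
          rw [this]
  -- assemble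
  set μ : ℝ := -2 * Λ.re with hμdef
  set Rest : ℂ := T2 + (X1 + X2 + ⟪r₁, V r₂⟫) with hRest
  have hRestb : μ ^ (k₁s + k₂s - 1) * ‖Rest‖ ≤ D * μ := by
    have hpowe : μ ^ (k₁s + k₂s - 1) = μ ^ (k₁s + k₂s - 2) * μ := by
      rw [← pow_succ]; congr 1; omega
    have hpowμ : μ ^ (k₁s + k₂s - 1) ≤ μ := by
      calc μ ^ (k₁s + k₂s - 1) ≤ μ ^ 1 := pow_le_pow_of_le_one hμ0.le hμ1 (by omega)
        _ = μ := pow_one μ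
    have hX : ‖X1 + X2 + ⟪r₁, V r₂⟫‖ ≤ 2 * M * Cc * Cp + Cp := by
      calc ‖X1 + X2 + ⟪r₁, V r₂⟫‖ ≤ ‖X1‖ + ‖X2‖ + ‖⟪r₁, V r₂⟫‖ := norm_add₃_le
        _ ≤ (M : ℝ) * (Cc * Cp) + (M : ℝ) * (Cc * Cp) + Cp := by gcongr
        _ = 2 * M * Cc * Cp + Cp := by ring
    calc μ ^ (k₁s + k₂s - 1) * ‖Rest‖
        ≤ μ ^ (k₁s + k₂s - 1) * (‖T2‖ + ‖X1 + X2 + ⟪r₁, V r₂⟫‖) :=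
          mul_le_mul_of_nonneg_left (norm_add_le _ _) (by positivity)
      _ = μ * (μ ^ (k₁s + k₂s - 2) * ‖T2‖)
          + μ ^ (k₁s + k₂s - 1) * ‖X1 + X2 + ⟪r₁, V r₂⟫‖ := by
          rw [mul_add, hpowe]; ring
      _ ≤ μ * ((M * M : ℝ) * (Cc * Cc * BB)) + μ * (2 * M * Cc * Cp + Cp) := by
          refine add_le_add (mul_le_mul_of_nonneg_left hT2b hμ0.le) ?_
          exact mul_le_mul hpowμ hX (norm_nonneg _) hμ0.le
      _ = D * μ := by rw [hDdef]; ring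
  have hab : α * β ≤ ‖cc₁ k₁s‖ * ‖cc₂ k₂s‖ :=
    mul_le_mul hlow₁ hlow₂ hβ.le (norm_nonneg _)
  have habup : ‖cc₁ k₁s‖ * ‖cc₂ k₂s‖ ≤ Cc * Cc :=
    mul_le_mul (hcb₁ k₁s hk₁ hk₁M) (hcb₂ k₂s hk₂ hk₂M) (norm_nonneg _)
      (le_trans (by norm_num) hCc)
  have habpos : 0 < α * β := by positivity
  have hμden : 0 < α * β * (3 ^ (2 * M) * CR) + D := by positivity
  have hεmul : (α * β * (3 ^ (2 * M) * CR) + D) * μ ≤ α * β * c0 / 2 := by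
    calc (α * β * (3 ^ (2 * M) * CR) + D) * μ
        = μ * (α * β * (3 ^ (2 * M) * CR) + D) := mul_comm _ _
      _ ≤ (α * β * c0 / 2 / (α * β * (3 ^ (2 * M) * CR) + D))
            * (α * β * (3 ^ (2 * M) * CR) + D) :=
          mul_le_mul_of_nonneg_right hμε hμden.le
      _ = α * β * c0 / 2 := div_mul_cancel₀ _ hμden.ne'
  have hc0μ : 0 ≤ c0 - 3 ^ (2 * M) * CR * μ := by
    have h1 : α * β * (3 ^ (2 * M) * CR) * μ ≤ α * β * c0 / 2 := by nlinarith [hDpos, hμ0]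
    have h2 : 3 ^ (2 * M) * CR * μ ≤ c0 / 2 := by
      have := (mul_le_mul_iff_right₀ habpos).mp (by nlinarith : α * β * (3 ^ (2 * M) * CR * μ) ≤ α * β * (c0 / 2))
      linarith
    linarith
  have htst : ‖(starRingEnd ℂ) (cc₁ k₁s) * cc₂ k₂s * G k₁s k₂s‖
      = ‖cc₁ k₁s‖ * ‖cc₂ k₂s‖ * ‖G k₁s k₂s‖ := by
    rw [norm_mul, norm_mul, RCLike.norm_conj]
  have hmainlow : α * β * c0 - α * β * (3 ^ (2 * M) * CR) * μ
      ≤ μ ^ (k₁s + k₂s - 1) * ‖(starRingEnd ℂ) (cc₁ k₁s) * cc₂ k₂s * G k₁s k₂s‖ := by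
    have h1 : α * β * (c0 - 3 ^ (2 * M) * CR * μ)
        ≤ (‖cc₁ k₁s‖ * ‖cc₂ k₂s‖) * (μ ^ (k₁s + k₂s - 1) * ‖G k₁s k₂s‖) :=
      mul_le_mul hab hGlow hc0μ (by positivity)
    calc α * β * c0 - α * β * (3 ^ (2 * M) * CR) * μ
        = α * β * (c0 - 3 ^ (2 * M) * CR * μ) := by ring
      _ ≤ (‖cc₁ k₁s‖ * ‖cc₂ k₂s‖) * (μ ^ (k₁s + k₂s - 1) * ‖G k₁s k₂s‖) := h1
      _ = μ ^ (k₁s + k₂s - 1) * (‖cc₁ k₁s‖ * ‖cc₂ k₂s‖ * ‖G k₁s k₂s‖) := by ring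
      _ = _ := by rw [htst]
  have hmainup : μ ^ (k₁s + k₂s - 1) * ‖(starRingEnd ℂ) (cc₁ k₁s) * cc₂ k₂s * G k₁s k₂s‖
      ≤ Cc * Cc * BB := by
    rw [htst]
    calc μ ^ (k₁s + k₂s - 1) * (‖cc₁ k₁s‖ * ‖cc₂ k₂s‖ * ‖G k₁s k₂s‖)
        = (‖cc₁ k₁s‖ * ‖cc₂ k₂s‖) * (μ ^ (k₁s + k₂s - 1) * ‖G k₁s k₂s‖) := by ring
      _ ≤ (Cc * Cc) * BB :=
          mul_le_mul habup (hGup k₁s k₂s hk₁ hk₁M hk₂ hk₂M) (by positivity) (by positivity)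
      _ = Cc * Cc * BB := by ring
  have hSnorm_low : ‖(starRingEnd ℂ) (cc₁ k₁s) * cc₂ k₂s * G k₁s k₂s‖ - ‖Rest‖ ≤ ‖⟪f₁, V f₂⟫‖ := by
    rw [hS]
    have := norm_sub_norm_le ((starRingEnd ℂ) (cc₁ k₁s) * cc₂ k₂s * G k₁s k₂s) (-Rest)
    rw [sub_neg_eq_add, norm_neg] at this
    exact this
  have hSnorm_up : ‖⟪f₁, V f₂⟫‖ ≤ ‖(starRingEnd ℂ) (cc₁ k₁s) * cc₂ k₂s * G k₁s k₂s‖ + ‖Rest‖ := by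
    rw [hS]; exact norm_add_le _ _
  constructor
  · -- lower bound
    have m1 : μ ^ (k₁s + k₂s - 1) * ‖(starRingEnd ℂ) (cc₁ k₁s) * cc₂ k₂s * G k₁s k₂s‖
        - μ ^ (k₁s + k₂s - 1) * ‖Rest‖ ≤ μ ^ (k₁s + k₂s - 1) * ‖⟪f₁, V f₂⟫‖ := by
      have := mul_le_mul_of_nonneg_left hSnorm_low (pow_nonneg hμ0.le (k₁s + k₂s - 1))
      rw [mul_sub] at this
      exact this
    linarith
  · -- upper bound
    have m1 : μ ^ (k₁s + k₂s - 1) * ‖⟪f₁, V f₂⟫‖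
        ≤ μ ^ (k₁s + k₂s - 1) * ‖(starRingEnd ℂ) (cc₁ k₁s) * cc₂ k₂s * G k₁s k₂s‖
          + μ ^ (k₁s + k₂s - 1) * ‖Rest‖ := by
      have := mul_le_mul_of_nonneg_left hSnorm_up (pow_nonneg hμ0.le (k₁s + k₂s - 1))
      rw [mul_add] at this
      exact this
    have hDμ : D * μ ≤ D := by nlinarith
    linarith

set_option maxHeartbeats 1000000 in
/-- (Theorem 3.4(c), scaling law of the autocovariance along general
directions.)  Along a family of weak Lyapunov solutions with a dominant adjoint Jordan chain
`w_1(p),…,w_{M₁}(p)` for `conj(Λ(p))`, `Re Λ(p) < 0`, `Re Λ(p) → 0` as `p → p*⁻`, uniform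
bounds as stated, and families `f_m(p) = Σ_k c_{m,k}(p)·w_k(p) + r_m(p)` whose coefficients
are continuous at `p*`, whose remainder pairings with `V(p)` are uniformly bounded, and whose
top nonvanishing coefficients at `p*` are at indices `k₁*, k₂*` (with vanishing above them),
`|⟨f₁(p), V(p) f₂(p)⟩|` scales as `(−Re Λ(p))^{−(k₁*+k₂*−1)}` near `p*`. -/
theorem autocovariance_scaling_general_directions
    {H : Type*} [NormedAddCommGroup H] [InnerProductSpace ℂ H] [CompleteSpace H]
    (τ : ℝ) (hτ : 0 ≤ τ) (pstar : ℝ) (M₁ : ℕ) (hM₁ : 1 ≤ M₁)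
    (Cm Cp : ℝ) (hCm : 0 < Cm) (hCp : 0 < Cp)
    (A N V : ℝ → (H →L[ℂ] H)) (q : ℝ → ℝ) (Λ : ℝ → ℂ) (w : ℝ → ℕ → H)
    (hLyap : ∀ p < pstar, WeakLyapunov (A p) (N p) (V p) (q p) τ)
    (hre : ∀ p < pstar, (Λ p).re < 0)
    (hw0 : ∀ p < pstar, w p 0 = 0)
    (hchain : ∀ p < pstar, ∀ k, 1 ≤ k → k ≤ M₁ →
      (ContinuousLinearMap.adjoint (A p)) (w p k)
        = (starRingEnd ℂ) (Λ p) • w p k + w p (k - 1))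
    (hq : ∀ p < pstar, Cm ≤ ‖Λ p - (q p : ℂ)‖)
    (hN1 : ∀ p < pstar, Cm ≤ ‖⟪w p 1, (N p) (w p 1)⟫‖)
    (hNnorm : ∀ p < pstar, ‖N p‖ ≤ Cp)
    (hwnorm : ∀ p < pstar, ∀ k, 1 ≤ k → k ≤ M₁ → ‖w p k‖ ≤ Cp)
    (hΛ : ∀ p < pstar, ‖Λ p‖ ≤ Cp)
    (hqb : ∀ p < pstar, |q p| ≤ Cp)
    (hre0 : Tendsto (fun p => (Λ p).re) (nhdsWithin pstar (Set.Iio pstar)) (nhds 0))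
    (f₁ f₂ : ℝ → H) (c₁ c₂ : ℕ → ℝ → ℂ) (r₁ r₂ : ℝ → H)
    (hf₁ : ∀ p < pstar, f₁ p = (∑ k ∈ Finset.Icc 1 M₁, c₁ k p • w p k) + r₁ p)
    (hf₂ : ∀ p < pstar, f₂ p = (∑ k ∈ Finset.Icc 1 M₁, c₂ k p • w p k) + r₂ p)
    (hcont₁ : ∀ k, 1 ≤ k → k ≤ M₁ → ContinuousAt (c₁ k) pstar)
    (hcont₂ : ∀ k, 1 ≤ k → k ≤ M₁ → ContinuousAt (c₂ k) pstar)
    (hrr : ∀ p < pstar, ‖⟪r₁ p, (V p) (r₂ p)⟫‖ ≤ Cp)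
    (hrw : ∀ p < pstar, ∀ k, 1 ≤ k → k ≤ M₁ → ‖⟪r₁ p, (V p) (w p k)⟫‖ ≤ Cp)
    (hwr : ∀ p < pstar, ∀ k, 1 ≤ k → k ≤ M₁ → ‖⟪w p k, (V p) (r₂ p)⟫‖ ≤ Cp)
    (k₁s k₂s : ℕ)
    (hk₁mem : 1 ≤ k₁s ∧ k₁s ≤ M₁) (hk₂mem : 1 ≤ k₂s ∧ k₂s ≤ M₁)
    (hc₁star : c₁ k₁s pstar ≠ 0) (hc₂star : c₂ k₂s pstar ≠ 0)
    (hmax₁ : ∀ k, k₁s < k → c₁ k pstar = 0) (hmax₂ : ∀ k, k₂s < k → c₂ k pstar = 0)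
    (hzero₁ : ∀ k, k₁s < k → ∀ p < pstar, c₁ k p = 0)
    (hzero₂ : ∀ k, k₂s < k → ∀ p < pstar, c₂ k p = 0) :
    ∃ δ > 0, ∃ c C : ℝ, 0 < c ∧ c ≤ C ∧
      ∀ p : ℝ, pstar - δ < p → p < pstar →
        c * (-(Λ p).re) ^ (-((k₁s : ℤ) + (k₂s : ℤ) - 1))
            ≤ ‖⟪f₁ p, (V p) (f₂ p)⟫‖
        ∧ ‖⟪f₁ p, (V p) (f₂ p)⟫‖
            ≤ C * (-(Λ p).re) ^ (-((k₁s : ℤ) + (k₂s : ℤ) - 1)) := by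
  classical
  have ha₀ : 0 < ‖c₁ k₁s pstar‖ := norm_pos_iff.mpr hc₁star
  have hb₀ : 0 < ‖c₂ k₂s pstar‖ := norm_pos_iff.mpr hc₂star
  set α : ℝ := ‖c₁ k₁s pstar‖ / 2 with hαdef
  set β : ℝ := ‖c₂ k₂s pstar‖ / 2 with hβdef
  have hαpos : 0 < α := by positivity
  have hβpos : 0 < β := by positivity
  set CR : ℝ := (Real.exp τ * (2 * Cp ^ 2 + Cp)) * (Cp * (2 * Cp ^ 2 + Cp)) with hCRdef
  set c0 : ℝ := Real.exp (-(τ * Cp)) * Cm * Cm * Cm with hc0def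
  set BB : ℝ := 2 ^ (2 * M₁) * CR + 3 ^ (2 * M₁) * CR with hBBdef
  have hCRpos : 0 < CR := by rw [hCRdef]; positivity
  have hc0pos : 0 < c0 := by rw [hc0def]; positivity
  have hBBpos : 0 < BB := by rw [hBBdef]; positivity
  set Cc : ℝ := 1 + ∑ k ∈ Finset.Icc 1 M₁, (‖c₁ k pstar‖ + ‖c₂ k pstar‖) with hCcdef
  have hsumnn : 0 ≤ ∑ k ∈ Finset.Icc 1 M₁, (‖c₁ k pstar‖ + ‖c₂ k pstar‖) :=
    Finset.sum_nonneg fun k _ => by positivity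
  have hCc : 1 ≤ Cc := by rw [hCcdef]; linarith
  have hCcpos : 0 < Cc := lt_of_lt_of_le one_pos hCc
  clear_value α β CR c0 BB Cc
  set D : ℝ := (M₁ * M₁ : ℝ) * (Cc * Cc * BB) + (2 * M₁ * Cc * Cp + Cp) with hDdef
  have hDpos : 0 < D := by
    rw [hDdef]
    have h1 : (1:ℝ) ≤ (M₁:ℝ) := by exact_mod_cast hM₁
    positivity
  set εμ : ℝ := min 1 ((α * β * c0 / 2) / (α * β * (3 ^ (2 * M₁) * CR) + D)) with hεμdef
  have hεμpos : 0 < εμ := lt_min one_pos (div_pos (by positivity) (by positivity))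
  -- eventual properties in the left-neighborhood filter
  have hcoefbound : ∀ k, 1 ≤ k → k ≤ M₁ → ‖c₁ k pstar‖ < Cc ∧ ‖c₂ k pstar‖ < Cc := by
    intro k h1 h2
    have hmem : k ∈ Finset.Icc 1 M₁ := Finset.mem_Icc.mpr ⟨h1, h2⟩
    have hsingle : ‖c₁ k pstar‖ + ‖c₂ k pstar‖
        ≤ ∑ i ∈ Finset.Icc 1 M₁, (‖c₁ i pstar‖ + ‖c₂ i pstar‖) :=
      Finset.single_le_sum (f := fun i => ‖c₁ i pstar‖ + ‖c₂ i pstar‖)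
        (fun i _ => by positivity) hmem
    constructor <;> [skip; skip] <;> rw [hCcdef] <;> nlinarith [norm_nonneg (c₁ k pstar), norm_nonneg (c₂ k pstar)]
  have hevcoef : ∀ᶠ p in nhdsWithin pstar (Set.Iio pstar),
      ∀ k ∈ Finset.Icc 1 M₁, ‖c₁ k p‖ ≤ Cc ∧ ‖c₂ k p‖ ≤ Cc := by
    rw [Filter.eventually_all_finset]
    intro k hk
    rw [Finset.mem_Icc] at hk
    have t1 : Tendsto (fun p => ‖c₁ k p‖) (nhds pstar) (nhds ‖c₁ k pstar‖) :=
      (hcont₁ k hk.1 hk.2).norm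
    have t2 : Tendsto (fun p => ‖c₂ k p‖) (nhds pstar) (nhds ‖c₂ k pstar‖) :=
      (hcont₂ k hk.1 hk.2).norm
    have e1 := t1.eventually_lt_const (hcoefbound k hk.1 hk.2).1
    have e2 := t2.eventually_lt_const (hcoefbound k hk.1 hk.2).2
    exact ((e1.and e2).filter_mono nhdsWithin_le_nhds).mono fun p hp => ⟨hp.1.le, hp.2.le⟩
  have hevlow₁ : ∀ᶠ p in nhdsWithin pstar (Set.Iio pstar), α ≤ ‖c₁ k₁s p‖ := by
    have t1 : Tendsto (fun p => ‖c₁ k₁s p‖) (nhds pstar) (nhds ‖c₁ k₁s pstar‖) :=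
      (hcont₁ k₁s hk₁mem.1 hk₁mem.2).norm
    have := t1.eventually_const_lt (by rw [hαdef]; linarith : α < ‖c₁ k₁s pstar‖)
    exact (this.filter_mono nhdsWithin_le_nhds).mono fun p hp => hp.le
  have hevlow₂ : ∀ᶠ p in nhdsWithin pstar (Set.Iio pstar), β ≤ ‖c₂ k₂s p‖ := by
    have t2 : Tendsto (fun p => ‖c₂ k₂s p‖) (nhds pstar) (nhds ‖c₂ k₂s pstar‖) :=
      (hcont₂ k₂s hk₂mem.1 hk₂mem.2).norm
    have := t2.eventually_const_lt (by rw [hβdef]; linarith : β < ‖c₂ k₂s pstar‖)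
    exact (this.filter_mono nhdsWithin_le_nhds).mono fun p hp => hp.le
  have hevμ : ∀ᶠ p in nhdsWithin pstar (Set.Iio pstar), -2 * (Λ p).re ≤ εμ := by
    have := hre0.eventually_const_lt (by linarith : -(εμ / 2) < 0)
    exact this.mono fun p hp => by linarith
  have hev := hevcoef.and (hevlow₁.and (hevlow₂.and hevμ))
  obtain ⟨δ, hδpos, hδ⟩ := Metric.mem_nhdsWithin_iff.mp hev
  set K := k₁s + k₂s with hKdef
  set L : ℝ := α * β * c0 / 2 with hLdef
  set U : ℝ := Cc * Cc * BB + D with hUdef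
  have hLpos : 0 < L := by rw [hLdef]; positivity
  refine ⟨δ, hδpos, L / 2 ^ (K - 1), max (L / 2 ^ (K - 1)) (U / 2 ^ (K - 1)),
    by positivity, le_max_left _ _, ?_⟩
  intro p hp1 hp2
  have hpmem : p ∈ Metric.ball pstar δ ∩ Set.Iio pstar := by
    refine ⟨?_, hp2⟩
    rw [Metric.mem_ball, Real.dist_eq, abs_lt]
    constructor <;> linarith
  obtain ⟨hcoefs, hlow1, hlow2, hμε'⟩ := hδ hpmem
  have hμ1 : -2 * (Λ p).re ≤ 1 := le_trans hμε' (min_le_left _ _)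
  have hμε : -2 * (Λ p).re ≤ (α * β * c0 / 2) / (α * β * (3 ^ (2 * M₁) * CR) + D) :=
    le_trans hμε' (min_le_right _ _)
  have hmain := scaling_at_p τ (q p) hτ M₁ hM₁ Cm Cp Cc α β CR c0 BB D
    hCm hCp hCc hαpos hβpos hCRdef hc0def hBBdef hDdef
    (A p) (N p) (V p) (Λ p) (w p) (hLyap p hp2) (hre p hp2) (hw0 p hp2) (hchain p hp2)
    (hq p hp2) (hN1 p hp2) (hNnorm p hp2) (hwnorm p hp2) (hΛ p hp2) (hqb p hp2)
    (f₁ p) (f₂ p) (fun k => c₁ k p) (fun k => c₂ k p) (r₁ p) (r₂ p)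
    (hf₁ p hp2) (hf₂ p hp2) (hrr p hp2)
    (fun k h1 h2 => hrw p hp2 k h1 h2) (fun k h1 h2 => hwr p hp2 k h1 h2)
    k₁s k₂s hk₁mem.1 hk₁mem.2 hk₂mem.1 hk₂mem.2
    (fun k h1 h2 => (hcoefs k (Finset.mem_Icc.mpr ⟨h1, h2⟩)).1)
    (fun k h1 h2 => (hcoefs k (Finset.mem_Icc.mpr ⟨h1, h2⟩)).2)
    hlow1 hlow2 (fun k hk => hzero₁ k hk p hp2) (fun k hk => hzero₂ k hk p hp2) hμ1 hμε
  obtain ⟨hL, hU⟩ := hmain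
  have hν : 0 < -(Λ p).re := by have := hre p hp2; linarith
  have hμν : -2 * (Λ p).re = 2 * (-(Λ p).re) := by ring
  have h2ν : (-2 * (Λ p).re) ^ (K - 1) = 2 ^ (K - 1) * (-(Λ p).re) ^ (K - 1) := by
    rw [hμν, mul_pow]
  have hzpow : (-(Λ p).re) ^ (-((k₁s : ℤ) + (k₂s : ℤ) - 1))
      = ((-(Λ p).re) ^ (K - 1))⁻¹ := by
    have hzint : (-((k₁s : ℤ) + (k₂s : ℤ) - 1)) = -((K - 1 : ℕ) : ℤ) := by
      have : ((K - 1 : ℕ) : ℤ) = (k₁s : ℤ) + (k₂s : ℤ) - 1 := by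
        rw [hKdef]; omega
      rw [this]
    rw [hzint, zpow_neg, zpow_natCast]
  have hpowpos : (0:ℝ) < 2 ^ (K - 1) * (-(Λ p).re) ^ (K - 1) := by positivity
  constructor
  · -- lower
    rw [hzpow]
    have key : L ≤ 2 ^ (K - 1) * (-(Λ p).re) ^ (K - 1) * ‖⟪f₁ p, (V p) (f₂ p)⟫‖ := by
      rw [← h2ν]; exact hL
    rw [div_eq_mul_inv, mul_assoc, ← mul_inv, ← div_eq_mul_inv]
    rw [div_le_iff₀ hpowpos]
    linarith [key]
  · -- upper
    rw [hzpow]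
    have key : 2 ^ (K - 1) * (-(Λ p).re) ^ (K - 1) * ‖⟪f₁ p, (V p) (f₂ p)⟫‖ ≤ U := by
      rw [← h2ν]; exact hU
    have step : ‖⟪f₁ p, (V p) (f₂ p)⟫‖ ≤ U / 2 ^ (K - 1) * ((-(Λ p).re) ^ (K - 1))⁻¹ := by
      rw [div_eq_mul_inv, mul_assoc, ← mul_inv, ← div_eq_mul_inv, le_div_iff₀ hpowpos]
      linarith [key]
    exact step.trans (mul_le_mul_of_nonneg_right (le_max_right _ _) (by positivity))
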